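/- If a Turing machine T halts on input α_I, then the simulating subtyping machine built from the class table of Figure 4, started in configuration Z E E N L_# N M^L N L_{a₁} … N L_{a_m} N L_# Q_I^wR ◁ E E Z (where α_I = a₁…a_m), reaches the halting configuration •; conversely, if T does not halt on α_I, the subtyping machine runs forever, and in particular never halts. Hence Q_I^wR L_# N L_{a_m} N … L_{a₁} N M^L N L_# N E E Z ⊑ E E Z if and only if T halts on α_I. -/

import Mathlib

/-- An inheritance rule for a unary class table: `lhs x ◁ rhs x` (if `usesVar = true`)
or `lhs x ◁ rhs Z` (if `usesVar = false`), where all class names in `rhs` are unary and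
`Z` is the distinguished nullary class.  A ground type `C₁ C₂ … C_m Z` is represented by
the word `[C₁, C₂, …, C_m]` (the trailing `Z` is implicit). -/
structure URule (C : Type*) : Type _ where
  lhs : C
  rhs : List C
  usesVar : Bool

variable {C : Type*}

/-- The inheritance relation `◁` on ground types (words over unary class names, with the
trailing `Z` implicit), induced by a unary class table: `C w ◁ rhs[x := w]`. -/
def UInh (table : Set (URule C)) (w w' : List C) : Prop :=
  ∃ r ∈ table, ∃ u : List C,
    w = r.lhs :: u ∧ w' = r.rhs ++ (if r.usesVar then u else [])

/-- `◁*`, the reflexive transitive closure of the inheritance relation. -/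
def UInhStar (table : Set (URule C)) : List C → List C → Prop :=
  Relation.ReflTransGen (UInh table)

/-- Contravariant subtyping specialized to unary class tables:
`C₁…C_m Z ⊑ Z` iff `C₁…C_m Z ◁* Z`, and
`C₁…C_m Z ⊑ D₁ D₂…D_n Z` iff `C₁…C_m Z ◁* D₁ E₂…E_p Z` for some `E₂…E_p` with
`D₂…D_n Z ⊑ E₂…E_p Z` (note the contravariant flip). -/
inductive USub (table : Set (URule C)) : List C → List C → Prop
  | nil {w : List C} : UInhStar table w [] → USub table w []
  | cons {w e ds : List C} {d : C} :
      UInhStar table w (d :: e) → USub table ds e → USub table w (d :: ds)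

/-- A configuration of the subtyping machine: `some (w, w')` represents
`Z (reverse w) ◁ w' Z` (equivalently its mirrored `▷` form), i.e. the pending query
`w Z ⊑ w' Z`; `none` is the halting configuration `•`. -/
abbrev UConfig (C : Type*) := Option (List C × List C)

/-- Execution steps of the subtyping machine:
`(Z C_m…C₁ ◁ Z) ⇝ •` if `C₁…C_m Z ◁* Z`, and
`(Z C_m…C₁ ◁ D₁…D_n Z) ⇝ (Z E_p…E₂ ▷ D₂…D_n Z)` if `C₁…C_m Z ◁* D₁ E₂…E_p Z`
(the target being the mirror of `(Z D_n…D₂ ◁ E₂…E_p Z)`). -/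
inductive UStep (table : Set (URule C)) : UConfig C → UConfig C → Prop
  | halt {w : List C} : UInhStar table w [] → UStep table (some (w, [])) none
  | move {w e ds : List C} {d : C} :
      UInhStar table w (d :: e) → UStep table (some (w, d :: ds)) (some (ds, e))

/-- Movement directions of a Turing machine head. -/
inductive Dir : Type
  | left | stay | right
deriving DecidableEq

/-- A Turing machine configuration `(q, α, b, γ)`: current state, left part of the tape,
current symbol (`none` is the blank `⊥`), and right part of the tape. -/
structure TMCfg (Q Γ : Type*) : Type _ where
  state : Q
  left : List Γ
  cur : Option Γ
  right : List Γ

/-- A deterministic Turing machine `(Q, q_I, q_H, Σ, δ)` with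
`δ : Q × Σ_⊥ → Q × Σ × {L,S,R}`, where the halt state loops via `S`-steps. -/
structure TM (Q Γ : Type*) : Type _ where
  init : Q
  halt : Q
  δ : Q → Option Γ → Q × Γ × Dir
  halt_stay : ∀ a : Γ, δ halt (some a) = (halt, a, Dir.stay)
  halt_blank : ∃ a : Γ, δ halt none = (halt, a, Dir.stay)

variable {Q Γ : Type*}

/-- The execution steps of a Turing machine, including the steps that go outside
the existing tape. -/
inductive TMStep (M : TM Q Γ) : TMCfg Q Γ → TMCfg Q Γ → Prop
  | moveL {q : Q} {α γ : List Γ} {a : Γ} {b : Option Γ} {q' : Q} {b' : Γ} :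
      M.δ q b = (q', b', .left) →
      TMStep M ⟨q, α ++ [a], b, γ⟩ ⟨q', α, some a, b' :: γ⟩
  | stay {q : Q} {α γ : List Γ} {b : Option Γ} {q' : Q} {b' : Γ} :
      M.δ q b = (q', b', .stay) →
      TMStep M ⟨q, α, b, γ⟩ ⟨q', α, some b', γ⟩
  | moveR {q : Q} {α γ : List Γ} {c : Γ} {b : Option Γ} {q' : Q} {b' : Γ} :
      M.δ q b = (q', b', .right) →
      TMStep M ⟨q, α, b, c :: γ⟩ ⟨q', α ++ [b'], some c, γ⟩
  | moveLEnd {q : Q} {γ : List Γ} {b : Option Γ} {q' : Q} {b' : Γ} :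
      M.δ q b = (q', b', .left) →
      TMStep M ⟨q, [], b, γ⟩ ⟨q', [], none, b' :: γ⟩
  | moveREnd {q : Q} {α : List Γ} {b : Option Γ} {q' : Q} {b' : Γ} :
      M.δ q b = (q', b', .right) →
      TMStep M ⟨q, α, b, []⟩ ⟨q', α ++ [b'], none, []⟩

/-- `M` halts on input tape `α_I`: some run from `(q_I, ε, ⊥, α_I)` reaches
the halt state. -/
def TMHalts (M : TM Q Γ) (input : List Γ) : Prop :=
  ∃ cfg : TMCfg Q Γ,
    Relation.ReflTransGen (TMStep M) ⟨M.init, [], none, input⟩ cfg ∧ cfg.state = M.halt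

/-- The unary class names of the reduction (Figure 4): for each state `q` the classes
`Q_q^wL, Q_q^wR, Q_q^L, Q_q^R, Q_q^LR, Q_q^RL`; for each letter of `Σ ∪ {#}` a class
`L_a` (`Lt none` is `L_#`); and the auxiliary classes `N`, `E`, `M^L`, `M^R`. -/
inductive FCls (Q Γ : Type*) : Type _
  | QwL (q : Q) | QwR (q : Q) | QL (q : Q) | QR (q : Q) | QLR (q : Q) | QRL (q : Q)
  | Lt (a : Option Γ)
  | N | E | ML | MR

namespace FCls
variable {Q Γ : Type*}

/-- Swapping `L ↔ R` in a class name. -/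
def swap : FCls Q Γ → FCls Q Γ
  | QwL q => QwR q | QwR q => QwL q
  | QL q => QR q | QR q => QL q
  | QLR q => QRL q | QRL q => QLR q
  | ML => MR | MR => ML
  | Lt a => Lt a | N => N | E => E

end FCls

/-- Swapping `L ↔ R` in all class names of a rule. -/
def URule.swapLR {Q Γ : Type*} (r : URule (FCls Q Γ)) : URule (FCls Q Γ) :=
  ⟨r.lhs.swap, r.rhs.map FCls.swap, r.usesVar⟩

/-- Swapping `L ↔ R` as a direction. -/
def Dir.swap : Dir → Dir
  | .left => .right | .right => .left | .stay => .stay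

/-- The left-hand half of the class table of Figure 4, for halt state `qH` and
transition function `δ`; the full table also contains the `L ↔ R`-swapped rules. -/
inductive Fig4Core {Q Γ : Type*} (qH : Q) (δ : Q → Option Γ → Q × Γ × Dir) :
    Set (URule (FCls Q Γ))
  | waitHead (q : Q) : Fig4Core qH δ ⟨.QwL q, [.ML, .N, .QL q], true⟩
  | waitFar (q : Q) : Fig4Core qH δ ⟨.QwL q, [.MR, .N, .QwL q, .MR, .N], true⟩
  | waitLetter (q : Q) (a : Option Γ) :
      Fig4Core qH δ ⟨.QwL q, [.Lt a, .N, .QwL q, .Lt a, .N], true⟩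
  | turn (q : Q) : q ≠ qH → Fig4Core qH δ ⟨.QwL q, [.E, .QLR q, .N], true⟩
  | halt : Fig4Core qH δ ⟨.QwL qH, [.E, .E], false⟩
  | bounce (q : Q) : Fig4Core qH δ ⟨.E, [.QLR q, .N, .QwR q, .E, .E], true⟩
  | transL {q : Q} {a : Γ} {q' : Q} {b : Γ} : δ q (some a) = (q', b, .left) →
      Fig4Core qH δ
        ⟨.QL q, [.Lt (some a), .N, .QwL q', .ML, .N, .Lt (some b), .N], true⟩
  | transS {q : Q} {a : Γ} {q' : Q} {b : Γ} : δ q (some a) = (q', b, .stay) →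
      Fig4Core qH δ
        ⟨.QL q, [.Lt (some a), .N, .QwL q', .MR, .N, .Lt (some b), .N], true⟩
  | transR {q : Q} {a : Γ} {q' : Q} {b : Γ} : δ q (some a) = (q', b, .right) →
      Fig4Core qH δ
        ⟨.QL q, [.Lt (some a), .N, .QwL q', .Lt (some b), .N, .MR, .N], true⟩
  | blankL {q q' : Q} {b : Γ} : δ q none = (q', b, .left) →
      Fig4Core qH δ
        ⟨.QL q, [.Lt none, .N, .QwL q', .Lt none, .N, .ML, .N, .Lt (some b), .N], true⟩
  | blankS {q q' : Q} {b : Γ} : δ q none = (q', b, .stay) →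
      Fig4Core qH δ
        ⟨.QL q, [.Lt none, .N, .QwL q', .Lt none, .N, .MR, .N, .Lt (some b), .N], true⟩
  | blankR {q q' : Q} {b : Γ} : δ q none = (q', b, .right) →
      Fig4Core qH δ
        ⟨.QL q, [.Lt none, .N, .QwL q', .Lt none, .N, .Lt (some b), .N, .MR, .N], true⟩

/-- The class table of Figure 4 for a Turing machine `M`: the core rules together with
all rules obtained from them by swapping `L ↔ R` (both in the class names and in the
direction appearing in the side condition on `δ`). -/
def Fig4 {Q Γ : Type*} (M : TM Q Γ) : Set (URule (FCls Q Γ)) :=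
  Fig4Core M.halt M.δ ∪
    URule.swapLR ''
      (Fig4Core M.halt (fun q b => ((M.δ q b).1, (M.δ q b).2.1, (M.δ q b).2.2.swap)))

/-- The word (ground type, with the trailing `Z` implicit) of the initial configuration
`Z E E N L_# N M^L N L_{a₁} … N L_{a_m} N L_# Q_I^wR ◁ E E Z`, read off as the subtype
side of the query
`Q_I^wR L_# N L_{a_m} N … L_{a₁} N M^L N L_# N E E Z ⊑ E E Z`. -/
def initWord {Q Γ : Type*} (M : TM Q Γ) (input : List Γ) : List (FCls Q Γ) :=
  [.QwR M.init, .Lt none, .N] ++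
    (input.reverse.flatMap fun a => [.Lt (some a), .N]) ++
    [.ML, .N, .Lt none, .N, .E, .E]

section Dev
open Relation

namespace Fig4Sim

variable {Q Γ : Type*}

/-! ### Generic machinery -/

/-- counted steps -/
inductive StepsN {α : Type*} (R : α → α → Prop) : ℕ → α → α → Prop
  | refl (a) : StepsN R 0 a a
  | head {a b c n} : R a b → StepsN R n b c → StepsN R (n+1) a c

theorem StepsN.to_reflTransGen {α : Type*} {R : α → α → Prop} {n a b} :
    StepsN R n a b → Relation.ReflTransGen R a b := by
  intro h; induction h with
  | refl => exact .refl
  | head h _ ih => exact .head h ih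

theorem reflTransGen_iff_stepsN {α : Type*} {R : α → α → Prop} {a b} :
    Relation.ReflTransGen R a b ↔ ∃ n, StepsN R n a b := by
  constructor
  · intro h; induction h with
    | refl => exact ⟨0, .refl a⟩
    | tail _ h ih =>
        obtain ⟨n, hn⟩ := ih
        refine ⟨n+1, ?_⟩
        clear * - hn h
        induction hn with
        | refl => exact .head h (.refl _)
        | head h' _ ih => exact .head h' (ih h)
  · rintro ⟨n, h⟩; exact h.to_reflTransGen

theorem StepsN.tail {α : Type*} {R : α → α → Prop} {n a b c} :
    StepsN R n a b → R b c → StepsN R (n+1) a c := by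
  intro h hbc
  induction h with
  | refl => exact .head hbc (.refl _)
  | head h _ ih => exact .head h (ih hbc)

theorem transGen_iff_stepsN {α : Type*} {R : α → α → Prop} {a b} :
    Relation.TransGen R a b ↔ ∃ n, StepsN R (n+1) a b := by
  constructor
  · intro h; induction h with
    | single h => exact ⟨0, .head h (.refl _)⟩
    | tail _ h ih => obtain ⟨n, hn⟩ := ih; exact ⟨n+1, hn.tail h⟩
  · rintro ⟨n, h⟩
    cases h with
    | head h1 h2 => exact Relation.TransGen.head' h1 h2.to_reflTransGen

/-- determinism kills: if target is stuck, step counts agree -/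
def Stuck {α : Type*} (R : α → α → Prop) (a : α) : Prop := ¬ ∃ b, R a b

theorem stepsN_unique {α : Type*} {R : α → α → Prop}
    (hdet : ∀ {a b c}, R a b → R a c → b = c) {c : α} (hc : Stuck R c) :
    ∀ {m n a}, StepsN R m a c → StepsN R n a c → m = n := by
  intro m
  induction m with
  | zero =>
      intro n a h1 h2
      cases h1
      cases h2 with
      | refl => rfl
      | head h _ => exact absurd ⟨_, h⟩ hc
  | succ k ih =>
      intro n a h1 h2
      cases h1 with
      | head hab h1' =>
        cases h2 with
        | refl => exact absurd ⟨_, hab⟩ hc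
        | head hab' h2' =>
            cases hdet hab hab'
            rw [ih h1' h2']

theorem det_reach_stuck {α : Type*} {R : α → α → Prop}
    (hdet : ∀ {a b c}, R a b → R a c → b = c) {a c : α}
    (hc : Stuck R c) (hac : Relation.ReflTransGen R a c) :
    ∀ {b}, Relation.ReflTransGen R a b → Relation.ReflTransGen R b c := by
  intro b hab
  induction hab with
  | refl => exact hac
  | tail hb hstep ih =>
      rcases (Relation.reflTransGen_iff_eq_or_transGen.mp ih) with h | h
      · subst h; exact absurd ⟨_, hstep⟩ hc
      · rcases Relation.TransGen.head'_iff.mp h with ⟨x, hx, hxc⟩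
        cases hdet hx hstep
        exact hxc

/-! ### Simulation objects -/

variable (M : TM Q Γ)

/-- cells followed by `N` -/
def pcs (s : List (FCls Q Γ)) : List (FCls Q Γ) := s.flatMap fun x => [x, .N]

@[simp] theorem pcs_nil : pcs ([] : List (FCls Q Γ)) = [] := rfl
@[simp] theorem pcs_cons (x : FCls Q Γ) (s) : pcs (x :: s) = x :: .N :: pcs s := rfl
@[simp] theorem pcs_append (s t : List (FCls Q Γ)) : pcs (s ++ t) = pcs s ++ pcs t := by
  simp [pcs]

/-- letter cells of the current symbol -/
def curC (b : Option Γ) : List (FCls Q Γ) := b.toList.map fun a => .Lt (some a)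

@[simp] theorem curC_none : curC (none : Option Γ) = ([] : List (FCls Q Γ)) := rfl
@[simp] theorem curC_some (a : Γ) : curC (some a) = ([.Lt (some a)] : List (FCls Q Γ)) := rfl

/-- the tape word of a configuration, with marker facing left (`mf = true`) or right -/
def V (mf : Bool) (α : List Γ) (b : Option Γ) (γ : List Γ) : List (FCls Q Γ) :=
  .Lt none :: (α.map fun a => .Lt (some a)) ++
    (if mf then curC b ++ [.ML] else .MR :: curC b) ++
    (γ.map fun a => .Lt (some a)) ++ [.Lt none]

/-- checkpoint configurations: `dir = true` means an `L`-pass is upcoming -/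
def enc (dir mf : Bool) (c : TMCfg Q Γ) : UConfig (FCls Q Γ) :=
  if dir then
    some (.QwR c.state :: pcs (V mf c.left c.cur c.right).reverse ++ [.E, .E], [.E, .E])
  else
    some (.QwL c.state :: pcs (V mf c.left c.cur c.right) ++ [.E, .E], [.E, .E])

/-- coherence of the marker orientation with a blank current symbol -/
def Face (mf : Bool) (c : TMCfg Q Γ) : Prop :=
  c.cur = none → (if mf then c.left = [] else c.right = [])

/-! ### Rule membership -/

section Rules

theorem mem_swap {r : URule (FCls Q Γ)}
    (h : Fig4Core M.halt (fun q b => ((M.δ q b).1, (M.δ q b).2.1, (M.δ q b).2.2.swap)) r) :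
    r.swapLR ∈ Fig4 M := Or.inr ⟨r, h, rfl⟩

theorem mem_core {r : URule (FCls Q Γ)} (h : Fig4Core M.halt M.δ r) : r ∈ Fig4 M := Or.inl h

/-- one-rule inheritance -/
theorem inh_rule {c : FCls Q Γ} {rhs : List (FCls Q Γ)}
    (h : (⟨c, rhs, true⟩ : URule (FCls Q Γ)) ∈ Fig4 M) (u : List (FCls Q Γ)) :
    UInh (Fig4 M) (c :: u) (rhs ++ u) := ⟨_, h, u, rfl, by simp⟩

theorem inh_rule_nv {c : FCls Q Γ} {rhs : List (FCls Q Γ)}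
    (h : (⟨c, rhs, false⟩ : URule (FCls Q Γ)) ∈ Fig4 M) (u : List (FCls Q Γ)) :
    UInh (Fig4 M) (c :: u) rhs := ⟨_, h, u, rfl, by simp⟩

theorem dir_swap_eq_left {d : Dir} : d.swap = .left ↔ d = .right := by cases d <;> simp [Dir.swap]
theorem dir_swap_eq_right {d : Dir} : d.swap = .right ↔ d = .left := by cases d <;> simp [Dir.swap]
theorem dir_swap_eq_stay {d : Dir} : d.swap = .stay ↔ d = .stay := by cases d <;> simp [Dir.swap]

variable {M}

theorem mem_waitHeadL (q : Q) :
    (⟨.QwL q, [.ML, .N, .QL q], true⟩ : URule (FCls Q Γ)) ∈ Fig4 M :=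
  mem_core M (.waitHead q)

theorem mem_waitHeadR (q : Q) :
    (⟨.QwR q, [.MR, .N, .QR q], true⟩ : URule (FCls Q Γ)) ∈ Fig4 M :=
  mem_swap M (.waitHead q)

theorem mem_waitFarL (q : Q) :
    (⟨.QwL q, [.MR, .N, .QwL q, .MR, .N], true⟩ : URule (FCls Q Γ)) ∈ Fig4 M :=
  mem_core M (.waitFar q)

theorem mem_waitFarR (q : Q) :
    (⟨.QwR q, [.ML, .N, .QwR q, .ML, .N], true⟩ : URule (FCls Q Γ)) ∈ Fig4 M :=
  mem_swap M (.waitFar q)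

theorem mem_waitLetterL (q : Q) (a : Option Γ) :
    (⟨.QwL q, [.Lt a, .N, .QwL q, .Lt a, .N], true⟩ : URule (FCls Q Γ)) ∈ Fig4 M :=
  mem_core M (.waitLetter q a)

theorem mem_waitLetterR (q : Q) (a : Option Γ) :
    (⟨.QwR q, [.Lt a, .N, .QwR q, .Lt a, .N], true⟩ : URule (FCls Q Γ)) ∈ Fig4 M :=
  mem_swap M (.waitLetter q a)

theorem mem_turnL {q : Q} (h : q ≠ M.halt) :
    (⟨.QwL q, [.E, .QLR q, .N], true⟩ : URule (FCls Q Γ)) ∈ Fig4 M :=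
  mem_core M (.turn q h)

theorem mem_turnR {q : Q} (h : q ≠ M.halt) :
    (⟨.QwR q, [.E, .QRL q, .N], true⟩ : URule (FCls Q Γ)) ∈ Fig4 M :=
  mem_swap M (.turn q h)

theorem mem_haltL : (⟨.QwL M.halt, [.E, .E], false⟩ : URule (FCls Q Γ)) ∈ Fig4 M :=
  mem_core M .halt

theorem mem_haltR : (⟨.QwR M.halt, [.E, .E], false⟩ : URule (FCls Q Γ)) ∈ Fig4 M :=
  mem_swap M .halt

theorem mem_bounceL (q : Q) :
    (⟨.E, [.QLR q, .N, .QwR q, .E, .E], true⟩ : URule (FCls Q Γ)) ∈ Fig4 M :=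
  mem_core M (.bounce q)

theorem mem_bounceR (q : Q) :
    (⟨.E, [.QRL q, .N, .QwL q, .E, .E], true⟩ : URule (FCls Q Γ)) ∈ Fig4 M :=
  mem_swap M (.bounce q)

theorem mem_transLL {q : Q} {a : Γ} {q' : Q} {b : Γ} (h : M.δ q (some a) = (q', b, .left)) :
    (⟨.QL q, [.Lt (some a), .N, .QwL q', .ML, .N, .Lt (some b), .N], true⟩ : URule (FCls Q Γ))
      ∈ Fig4 M :=
  mem_core M (.transL h)

theorem mem_transSL {q : Q} {a : Γ} {q' : Q} {b : Γ} (h : M.δ q (some a) = (q', b, .stay)) :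
    (⟨.QL q, [.Lt (some a), .N, .QwL q', .MR, .N, .Lt (some b), .N], true⟩ : URule (FCls Q Γ))
      ∈ Fig4 M :=
  mem_core M (.transS h)

theorem mem_transRL {q : Q} {a : Γ} {q' : Q} {b : Γ} (h : M.δ q (some a) = (q', b, .right)) :
    (⟨.QL q, [.Lt (some a), .N, .QwL q', .Lt (some b), .N, .MR, .N], true⟩ : URule (FCls Q Γ))
      ∈ Fig4 M :=
  mem_core M (.transR h)

theorem mem_blankLL {q q' : Q} {b : Γ} (h : M.δ q none = (q', b, .left)) :
    (⟨.QL q, [.Lt none, .N, .QwL q', .Lt none, .N, .ML, .N, .Lt (some b), .N], true⟩ :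
      URule (FCls Q Γ)) ∈ Fig4 M :=
  mem_core M (.blankL h)

theorem mem_blankSL {q q' : Q} {b : Γ} (h : M.δ q none = (q', b, .stay)) :
    (⟨.QL q, [.Lt none, .N, .QwL q', .Lt none, .N, .MR, .N, .Lt (some b), .N], true⟩ :
      URule (FCls Q Γ)) ∈ Fig4 M :=
  mem_core M (.blankS h)

theorem mem_blankRL {q q' : Q} {b : Γ} (h : M.δ q none = (q', b, .right)) :
    (⟨.QL q, [.Lt none, .N, .QwL q', .Lt none, .N, .Lt (some b), .N, .MR, .N], true⟩ :
      URule (FCls Q Γ)) ∈ Fig4 M :=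
  mem_core M (.blankR h)

theorem mem_transRR {q : Q} {a : Γ} {q' : Q} {b : Γ} (h : M.δ q (some a) = (q', b, .right)) :
    (⟨.QR q, [.Lt (some a), .N, .QwR q', .MR, .N, .Lt (some b), .N], true⟩ : URule (FCls Q Γ))
      ∈ Fig4 M :=
  mem_swap M (.transL (by rw [h]; rfl))

theorem mem_transSR {q : Q} {a : Γ} {q' : Q} {b : Γ} (h : M.δ q (some a) = (q', b, .stay)) :
    (⟨.QR q, [.Lt (some a), .N, .QwR q', .ML, .N, .Lt (some b), .N], true⟩ : URule (FCls Q Γ))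
      ∈ Fig4 M :=
  mem_swap M (.transS (by rw [h]; rfl))

theorem mem_transLR {q : Q} {a : Γ} {q' : Q} {b : Γ} (h : M.δ q (some a) = (q', b, .left)) :
    (⟨.QR q, [.Lt (some a), .N, .QwR q', .Lt (some b), .N, .ML, .N], true⟩ : URule (FCls Q Γ))
      ∈ Fig4 M :=
  mem_swap M (.transR (by rw [h]; rfl))

theorem mem_blankRR {q q' : Q} {b : Γ} (h : M.δ q none = (q', b, .right)) :
    (⟨.QR q, [.Lt none, .N, .QwR q', .Lt none, .N, .MR, .N, .Lt (some b), .N], true⟩ :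
      URule (FCls Q Γ)) ∈ Fig4 M :=
  mem_swap M (.blankL (by rw [h]; rfl))

theorem mem_blankSR {q q' : Q} {b : Γ} (h : M.δ q none = (q', b, .stay)) :
    (⟨.QR q, [.Lt none, .N, .QwR q', .Lt none, .N, .ML, .N, .Lt (some b), .N], true⟩ :
      URule (FCls Q Γ)) ∈ Fig4 M :=
  mem_swap M (.blankS (by rw [h]; rfl))

theorem mem_blankLR {q q' : Q} {b : Γ} (h : M.δ q none = (q', b, .left)) :
    (⟨.QR q, [.Lt none, .N, .QwR q', .Lt none, .N, .Lt (some b), .N, .ML, .N], true⟩ :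
      URule (FCls Q Γ)) ∈ Fig4 M :=
  mem_swap M (.blankR (by rw [h]; rfl))

end Rules

/-! ### Forward step lemmas -/

section Forward

variable {M}

/-- one machine move justified by a single inheritance rule -/
theorem move_rule {c : FCls Q Γ} {rhs u : List (FCls Q Γ)} {d : FCls Q Γ}
    {e ds : List (FCls Q Γ)}
    (h : (⟨c, rhs, true⟩ : URule (FCls Q Γ)) ∈ Fig4 M) (hr : rhs ++ u = d :: e) :
    UStep (Fig4 M) (some (c :: u, d :: ds)) (some (ds, e)) :=
  .move (hr ▸ Relation.ReflTransGen.single (inh_rule M h u))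

/-- one machine move justified by reflexivity -/
theorem move_refl {d : FCls Q Γ} {u ds : List (FCls Q Γ)} :
    UStep (Fig4 M) (some (d :: u, d :: ds)) (some (ds, u)) :=
  .move .refl

/-- the scan step: transfer one passable cell -/
theorem scan_cell {q : Q} {x : FCls Q Γ} {u v : List (FCls Q Γ)}
    (hrule : (⟨.QwL q, [x, .N, .QwL q, x, .N], true⟩ : URule (FCls Q Γ)) ∈ Fig4 M) :
    Relation.ReflTransGen (UStep (Fig4 M))
      (some (.QwL q :: u, x :: .N :: v)) (some (.QwL q :: x :: .N :: u, v)) := by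
  refine .head (move_rule hrule rfl) (.single ?_)
  exact move_refl

theorem scan_cellR {q : Q} {x : FCls Q Γ} {u v : List (FCls Q Γ)}
    (hrule : (⟨.QwR q, [x, .N, .QwR q, x, .N], true⟩ : URule (FCls Q Γ)) ∈ Fig4 M) :
    Relation.ReflTransGen (UStep (Fig4 M))
      (some (.QwR q :: u, x :: .N :: v)) (some (.QwR q :: x :: .N :: u, v)) := by
  refine .head (move_rule hrule rfl) (.single ?_)
  exact move_refl

/-- cells passable during an `L`-pass -/
def PassL (x : FCls Q Γ) : Prop := (∃ a, x = .Lt a) ∨ x = .MR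

def PassR (x : FCls Q Γ) : Prop := (∃ a, x = .Lt a) ∨ x = .ML

theorem scanL {q : Q} {s : List (FCls Q Γ)} (hs : ∀ x ∈ s, PassL x) :
    ∀ u v : List (FCls Q Γ),
      Relation.ReflTransGen (UStep (Fig4 M))
        (some (.QwL q :: u, pcs s ++ v)) (some (.QwL q :: pcs s.reverse ++ u, v)) := by
  induction s with
  | nil => intro u v; simpa using Relation.ReflTransGen.refl
  | cons x s ih =>
      intro u v
      have hx : PassL x := hs x (by simp)
      have hcell : (⟨.QwL q, [x, .N, .QwL q, x, .N], true⟩ : URule (FCls Q Γ)) ∈ Fig4 M := by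
        rcases hx with ⟨a, rfl⟩ | rfl
        · exact mem_waitLetterL q a
        · exact mem_waitFarL q
      refine .trans (scan_cell hcell) ?_
      have := ih (fun y hy => hs y (by simp [hy])) (x :: .N :: u) v
      simpa [pcs, List.flatMap] using this

theorem scanR {q : Q} {s : List (FCls Q Γ)} (hs : ∀ x ∈ s, PassR x) :
    ∀ u v : List (FCls Q Γ),
      Relation.ReflTransGen (UStep (Fig4 M))
        (some (.QwR q :: u, pcs s ++ v)) (some (.QwR q :: pcs s.reverse ++ u, v)) := by
  induction s with
  | nil => intro u v; simpa using Relation.ReflTransGen.refl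
  | cons x s ih =>
      intro u v
      have hx : PassR x := hs x (by simp)
      have hcell : (⟨.QwR q, [x, .N, .QwR q, x, .N], true⟩ : URule (FCls Q Γ)) ∈ Fig4 M := by
        rcases hx with ⟨a, rfl⟩ | rfl
        · exact mem_waitLetterR q a
        · exact mem_waitFarR q
      refine .trans (scan_cellR hcell) ?_
      have := ih (fun y hy => hs y (by simp [hy])) (x :: .N :: u) v
      simpa [pcs, List.flatMap] using this

/-- turn at the end: `(Q_q^{wR} z ++ EE ◁ EE) ⇝³ (Q_q^{wL} E E ◁ z ++ EE)` -/
theorem turnL {q : Q} (hq : q ≠ M.halt) (z : List (FCls Q Γ)) :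
    Relation.TransGen (UStep (Fig4 M))
      (some (.QwR q :: z ++ [.E, .E], [.E, .E])) (some ([.QwL q, .E, .E], z ++ [.E, .E])) := by
  refine .head' (move_rule (mem_turnR hq) rfl)
    (.head (move_rule (mem_bounceR q) rfl) (.single move_refl))

theorem turnR {q : Q} (hq : q ≠ M.halt) (z : List (FCls Q Γ)) :
    Relation.TransGen (UStep (Fig4 M))
      (some (.QwL q :: z ++ [.E, .E], [.E, .E])) (some ([.QwR q, .E, .E], z ++ [.E, .E])) := by
  refine .head' (move_rule (mem_turnL hq) rfl)
    (.head (move_rule (mem_bounceL q) rfl) (.single move_refl))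

/-- halting: from a checkpoint with the halt state, reach `•` -/
theorem halt_endL (u : List (FCls Q Γ)) :
    Relation.ReflTransGen (UStep (Fig4 M))
      (some (.QwL M.halt :: u, [.E, .E])) none := by
  refine .head (.move (w := .QwL M.halt :: u) (d := .E) (e := [.E])
      (.single (inh_rule_nv M mem_haltL u))) ?_
  exact .head move_refl (.single (.halt .refl))

theorem halt_endR (u : List (FCls Q Γ)) :
    Relation.ReflTransGen (UStep (Fig4 M))
      (some (.QwR M.halt :: u, [.E, .E])) none := by
  refine .head (.move (w := .QwR M.halt :: u) (d := .E) (e := [.E])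
      (.single (inh_rule_nv M mem_haltR u))) ?_
  exact .head move_refl (.single (.halt .refl))

end Forward

/-! ### Triggers and full passes -/

section Pass

variable {M}

theorem trigL_core {q q' : Q} {x : Option Γ} {X u v : List (FCls Q Γ)}
    (hrule : (⟨.QL q, .Lt x :: .N :: .QwL q' :: X, true⟩ : URule (FCls Q Γ)) ∈ Fig4 M) :
    Relation.ReflTransGen (UStep (Fig4 M))
      (some (.QwL q :: u, .ML :: .N :: .Lt x :: .N :: v)) (some (.QwL q' :: X ++ u, v)) :=
  .head (move_rule (mem_waitHeadL q) rfl) (.head move_refl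
    (.head (move_rule hrule rfl) (.single move_refl)))

theorem trigR_core {q q' : Q} {x : Option Γ} {X u v : List (FCls Q Γ)}
    (hrule : (⟨.QR q, .Lt x :: .N :: .QwR q' :: X, true⟩ : URule (FCls Q Γ)) ∈ Fig4 M) :
    Relation.ReflTransGen (UStep (Fig4 M))
      (some (.QwR q :: u, .MR :: .N :: .Lt x :: .N :: v)) (some (.QwR q' :: X ++ u, v)) :=
  .head (move_rule (mem_waitHeadR q) rfl) (.head move_refl
    (.head (move_rule hrule rfl) (.single move_refl)))

/-- a full `L`-pass with a trigger -/
theorem passL_total {q q' : Q} {x : Option Γ} {E₀ : List (FCls Q Γ)} {s₁ s₂ : List (FCls Q Γ)}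
    (hq : q ≠ M.halt) (h₁ : ∀ y ∈ s₁, PassL y) (h₂ : ∀ y ∈ s₂, PassL y)
    (hrule : (⟨.QL q, .Lt x :: .N :: .QwL q' :: pcs E₀, true⟩ : URule (FCls Q Γ)) ∈ Fig4 M) :
    Relation.TransGen (UStep (Fig4 M))
      (some (.QwR q :: pcs (s₁ ++ [.ML, .Lt x] ++ s₂) ++ [.E, .E], [.E, .E]))
      (some (.QwL q' :: pcs (s₂.reverse ++ E₀ ++ s₁.reverse) ++ [.E, .E], [.E, .E])) := by
  refine (turnL hq _).trans_left ?_
  have h1 := scanL (M := M) (q := q) h₁ [.E, .E]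
    ([.ML, .N, .Lt x, .N] ++ pcs s₂ ++ [.E, .E])
  have h2 := trigL_core (M := M) (u := pcs s₁.reverse ++ [.E, .E]) (v := pcs s₂ ++ [.E, .E]) hrule
  have h3 := scanL (M := M) (q := q') h₂ (pcs E₀ ++ pcs s₁.reverse ++ [.E, .E]) [.E, .E]
  refine .trans (by simpa using h1) (.trans h2 (by simpa using h3))

/-- a full `R`-pass with a trigger -/
theorem passR_total {q q' : Q} {x : Option Γ} {E₀ : List (FCls Q Γ)} {s₁ s₂ : List (FCls Q Γ)}
    (hq : q ≠ M.halt) (h₁ : ∀ y ∈ s₁, PassR y) (h₂ : ∀ y ∈ s₂, PassR y)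
    (hrule : (⟨.QR q, .Lt x :: .N :: .QwR q' :: pcs E₀, true⟩ : URule (FCls Q Γ)) ∈ Fig4 M) :
    Relation.TransGen (UStep (Fig4 M))
      (some (.QwL q :: pcs (s₁ ++ [.MR, .Lt x] ++ s₂) ++ [.E, .E], [.E, .E]))
      (some (.QwR q' :: pcs (s₂.reverse ++ E₀ ++ s₁.reverse) ++ [.E, .E], [.E, .E])) := by
  refine (turnR hq _).trans_left ?_
  have h1 := scanR (M := M) (q := q) h₁ [.E, .E]
    ([.MR, .N, .Lt x, .N] ++ pcs s₂ ++ [.E, .E])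
  have h2 := trigR_core (M := M) (u := pcs s₁.reverse ++ [.E, .E]) (v := pcs s₂ ++ [.E, .E]) hrule
  have h3 := scanR (M := M) (q := q') h₂ (pcs E₀ ++ pcs s₁.reverse ++ [.E, .E]) [.E, .E]
  refine .trans (by simpa using h1) (.trans h2 (by simpa using h3))

/-- a full `L`-pass without a trigger -/
theorem skipL_total {q : Q} {s : List (FCls Q Γ)} (hq : q ≠ M.halt) (hs : ∀ y ∈ s, PassL y) :
    Relation.TransGen (UStep (Fig4 M))
      (some (.QwR q :: pcs s ++ [.E, .E], [.E, .E]))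
      (some (.QwL q :: pcs s.reverse ++ [.E, .E], [.E, .E])) := by
  refine (turnL hq _).trans_left ?_
  simpa using scanL (M := M) (q := q) hs [.E, .E] [.E, .E]

theorem skipR_total {q : Q} {s : List (FCls Q Γ)} (hq : q ≠ M.halt) (hs : ∀ y ∈ s, PassR y) :
    Relation.TransGen (UStep (Fig4 M))
      (some (.QwL q :: pcs s ++ [.E, .E], [.E, .E]))
      (some (.QwR q :: pcs s.reverse ++ [.E, .E], [.E, .E])) := by
  refine (turnR hq _).trans_left ?_
  simpa using scanR (M := M) (q := q) hs [.E, .E] [.E, .E]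

end Pass

/-! ### Passes at the encoding level -/

section EncPass

variable {M}

theorem passL_letters {s : List (FCls Q Γ)} (h : ∀ y ∈ s, ∃ a, y = .Lt a) :
    ∀ y ∈ s, PassL y := fun y hy => Or.inl (h y hy)

theorem passR_letters {s : List (FCls Q Γ)} (h : ∀ y ∈ s, ∃ a, y = .Lt a) :
    ∀ y ∈ s, PassR y := fun y hy => Or.inl (h y hy)

theorem letters_map {γ : List Γ} {y : FCls Q Γ}
    (hy : y ∈ List.map (fun a => (FCls.Lt (some a) : FCls Q Γ)) γ) : ∃ a, y = .Lt a := by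
  simp at hy; obtain ⟨a, _, rfl⟩ := hy; exact ⟨_, rfl⟩

theorem V_false_passL {α : List Γ} {b : Option Γ} {γ : List Γ} :
    ∀ y ∈ V (Q := Q) false α b γ, PassL y := by
  intro y hy
  simp [V, curC] at hy
  rcases hy with rfl | ⟨a, _, rfl⟩ | rfl | ⟨a, _, rfl⟩ | ⟨a, _, rfl⟩ | rfl
  all_goals first
    | exact Or.inr rfl
    | exact Or.inl ⟨_, rfl⟩

theorem V_true_passR {α : List Γ} {b : Option Γ} {γ : List Γ} :
    ∀ y ∈ V (Q := Q) true α b γ, PassR y := by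
  intro y hy
  simp [V, curC] at hy
  rcases hy with rfl | ⟨a, _, rfl⟩ | ⟨a, _, rfl⟩ | rfl | ⟨a, _, rfl⟩ | rfl
  all_goals first
    | exact Or.inr rfl
    | exact Or.inl ⟨_, rfl⟩

/-- a pass that does not trigger -/
theorem pass_skip {c : TMCfg Q Γ} {mf dir : Bool} (hq : c.state ≠ M.halt) (hmf : mf ≠ dir) :
    Relation.TransGen (UStep (Fig4 M)) (enc dir mf c) (enc (!dir) mf c) := by
  obtain ⟨q, α, b, γ⟩ := c
  cases dir
  · -- upcoming R-pass, mf = true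
    have hmf' : mf = true := by revert hmf; cases mf <;> simp
    subst hmf'
    have := skipR_total (M := M) (s := V true α b γ) hq
      (fun y hy => V_true_passR y hy)
    simpa [enc] using this
  · have hmf' : mf = false := by revert hmf; cases mf <;> simp
    subst hmf'
    have := skipL_total (M := M) (s := (V false α b γ).reverse) hq
      (fun y hy => V_false_passL y (List.mem_reverse.mp hy))
    simpa [enc] using this

end EncPass

section Trigger

variable {M}

private theorem lettersL₁ (γ : List Γ) :
    ∀ y ∈ (FCls.Lt (none : Option Γ) ::
      (List.map (fun a => (FCls.Lt (some a) : FCls Q Γ)) γ).reverse), PassL y := by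
  intro y hy
  rcases List.mem_cons.mp hy with rfl | hy
  · exact Or.inl ⟨_, rfl⟩
  · exact Or.inl (letters_map (List.mem_reverse.mp hy))

private theorem lettersL₂ (α : List Γ) :
    ∀ y ∈ ((List.map (fun a => (FCls.Lt (some a) : FCls Q Γ)) α).reverse ++
      [FCls.Lt (none : Option Γ)]), PassL y := by
  intro y hy
  rcases List.mem_append.mp hy with hy | hy
  · exact Or.inl (letters_map (List.mem_reverse.mp hy))
  · rcases List.mem_singleton.mp hy with rfl; exact Or.inl ⟨_, rfl⟩

private theorem lettersR₁ (α : List Γ) :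
    ∀ y ∈ (FCls.Lt (none : Option Γ) ::
      List.map (fun a => (FCls.Lt (some a) : FCls Q Γ)) α), PassR y := by
  intro y hy
  rcases List.mem_cons.mp hy with rfl | hy
  · exact Or.inl ⟨_, rfl⟩
  · exact Or.inl (letters_map hy)

private theorem lettersR₂ (γ : List Γ) :
    ∀ y ∈ (List.map (fun a => (FCls.Lt (some a) : FCls Q Γ)) γ ++
      [FCls.Lt (none : Option Γ)]), PassR y := by
  intro y hy
  rcases List.mem_append.mp hy with hy | hy
  · exact Or.inl (letters_map hy)
  · rcases List.mem_singleton.mp hy with rfl; exact Or.inl ⟨_, rfl⟩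

private theorem letters_nil {P : FCls Q Γ → Prop} : ∀ y ∈ ([] : List (FCls Q Γ)), P y := by
  simp

theorem pass_trigger {c c' : TMCfg Q Γ} {dir : Bool} (hq : c.state ≠ M.halt)
    (hface : Face dir c) (hstep : TMStep M c c') :
    ∃ mf', Face mf' c' ∧
      Relation.TransGen (UStep (Fig4 M)) (enc dir dir c) (enc (!dir) mf' c') := by
  cases hstep with
  | @moveL q α γ a b q' b' hδ =>
      cases dir
      · -- R-pass, marker `MR`
        cases b with
        | none =>
            simp [Face] at hface
            refine ⟨true, by simp [Face], ?_⟩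
            have key := passR_total (M := M) (x := (none : Option Γ))
              (E₀ := [.Lt none, .Lt (some b'), .ML])
              (s₁ := .Lt none :: List.map (fun a => (FCls.Lt (some a) : FCls Q Γ)) (α ++ [a]))
              (s₂ := []) hq (lettersR₁ _) letters_nil (mem_blankLR hδ)
            simpa [enc, V, curC, hface] using key
        | some a₁ =>
            refine ⟨true, by simp [Face], ?_⟩
            have key := passR_total (M := M) (x := some a₁)
              (E₀ := [.Lt (some b'), .ML])
              (s₁ := .Lt none :: List.map (fun a => (FCls.Lt (some a) : FCls Q Γ)) (α ++ [a]))
              (s₂ := List.map (fun a => (FCls.Lt (some a) : FCls Q Γ)) γ ++ [.Lt none])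
              hq (lettersR₁ _) (lettersR₂ _) (mem_transLR hδ)
            simpa [enc, V, curC] using key
      · -- L-pass, marker `ML`
        cases b with
        | none => simp [Face] at hface
        | some a₁ =>
            refine ⟨true, by simp [Face], ?_⟩
            have key := passL_total (M := M) (x := some a₁)
              (E₀ := [.ML, .Lt (some b')])
              (s₁ := .Lt none ::
                (List.map (fun a => (FCls.Lt (some a) : FCls Q Γ)) γ).reverse)
              (s₂ := (List.map (fun a => (FCls.Lt (some a) : FCls Q Γ)) (α ++ [a])).reverse ++
                [.Lt none])
              hq (lettersL₁ _) (lettersL₂ _) (mem_transLL hδ)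
            simpa [enc, V, curC] using key
  | @stay q α γ b q' b' hδ =>
      cases dir
      · cases b with
        | none =>
            simp [Face] at hface
            refine ⟨true, by simp [Face], ?_⟩
            have key := passR_total (M := M) (x := (none : Option Γ))
              (E₀ := [.Lt none, .ML, .Lt (some b')])
              (s₁ := .Lt none :: List.map (fun a => (FCls.Lt (some a) : FCls Q Γ)) α)
              (s₂ := []) hq (lettersR₁ _) letters_nil (mem_blankSR hδ)
            simpa [enc, V, curC, hface] using key
        | some a₁ =>
            refine ⟨true, by simp [Face], ?_⟩
            have key := passR_total (M := M) (x := some a₁)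
              (E₀ := [.ML, .Lt (some b')])
              (s₁ := .Lt none :: List.map (fun a => (FCls.Lt (some a) : FCls Q Γ)) α)
              (s₂ := List.map (fun a => (FCls.Lt (some a) : FCls Q Γ)) γ ++ [.Lt none])
              hq (lettersR₁ _) (lettersR₂ _) (mem_transSR hδ)
            simpa [enc, V, curC] using key
      · cases b with
        | none =>
            simp [Face] at hface
            refine ⟨false, by simp [Face], ?_⟩
            have key := passL_total (M := M) (x := (none : Option Γ))
              (E₀ := [.Lt none, .MR, .Lt (some b')])
              (s₁ := .Lt none ::
                (List.map (fun a => (FCls.Lt (some a) : FCls Q Γ)) γ).reverse)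
              (s₂ := []) hq (lettersL₁ _) letters_nil (mem_blankSL hδ)
            simpa [enc, V, curC, hface] using key
        | some a₁ =>
            refine ⟨false, by simp [Face], ?_⟩
            have key := passL_total (M := M) (x := some a₁)
              (E₀ := [.MR, .Lt (some b')])
              (s₁ := .Lt none ::
                (List.map (fun a => (FCls.Lt (some a) : FCls Q Γ)) γ).reverse)
              (s₂ := (List.map (fun a => (FCls.Lt (some a) : FCls Q Γ)) α).reverse ++ [.Lt none])
              hq (lettersL₁ _) (lettersL₂ _) (mem_transSL hδ)
            simpa [enc, V, curC] using key
  | @moveR q α γ c₀ b q' b' hδ =>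
      cases dir
      · cases b with
        | none => simp [Face] at hface
        | some a₁ =>
            refine ⟨false, by simp [Face], ?_⟩
            have key := passR_total (M := M) (x := some a₁)
              (E₀ := [.MR, .Lt (some b')])
              (s₁ := .Lt none :: List.map (fun a => (FCls.Lt (some a) : FCls Q Γ)) α)
              (s₂ := List.map (fun a => (FCls.Lt (some a) : FCls Q Γ)) (c₀ :: γ) ++ [.Lt none])
              hq (lettersR₁ _) (lettersR₂ _) (mem_transRR hδ)
            simpa [enc, V, curC] using key
      · cases b with
        | none =>
            simp [Face] at hface
            refine ⟨false, by simp [Face], ?_⟩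
            have key := passL_total (M := M) (x := (none : Option Γ))
              (E₀ := [.Lt none, .Lt (some b'), .MR])
              (s₁ := .Lt none ::
                (List.map (fun a => (FCls.Lt (some a) : FCls Q Γ)) (c₀ :: γ)).reverse)
              (s₂ := []) hq (lettersL₁ _) letters_nil (mem_blankRL hδ)
            simpa [enc, V, curC, hface] using key
        | some a₁ =>
            refine ⟨false, by simp [Face], ?_⟩
            have key := passL_total (M := M) (x := some a₁)
              (E₀ := [.Lt (some b'), .MR])
              (s₁ := .Lt none ::
                (List.map (fun a => (FCls.Lt (some a) : FCls Q Γ)) (c₀ :: γ)).reverse)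
              (s₂ := (List.map (fun a => (FCls.Lt (some a) : FCls Q Γ)) α).reverse ++ [.Lt none])
              hq (lettersL₁ _) (lettersL₂ _) (mem_transRL hδ)
            simpa [enc, V, curC] using key
  | @moveLEnd q γ b q' b' hδ =>
      cases dir
      · cases b with
        | none =>
            simp [Face] at hface
            refine ⟨true, by simp [Face], ?_⟩
            have key := passR_total (M := M) (x := (none : Option Γ))
              (E₀ := [.Lt none, .Lt (some b'), .ML])
              (s₁ := .Lt none :: List.map (fun a => (FCls.Lt (some a) : FCls Q Γ)) [])
              (s₂ := []) hq (lettersR₁ _) letters_nil (mem_blankLR hδ)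
            simpa [enc, V, curC, hface] using key
        | some a₁ =>
            refine ⟨true, by simp [Face], ?_⟩
            have key := passR_total (M := M) (x := some a₁)
              (E₀ := [.Lt (some b'), .ML])
              (s₁ := .Lt none :: List.map (fun a => (FCls.Lt (some a) : FCls Q Γ)) [])
              (s₂ := List.map (fun a => (FCls.Lt (some a) : FCls Q Γ)) γ ++ [.Lt none])
              hq (lettersR₁ _) (lettersR₂ _) (mem_transLR hδ)
            simpa [enc, V, curC] using key
      · cases b with
        | none =>
            refine ⟨true, by simp [Face], ?_⟩
            have key := passL_total (M := M) (x := (none : Option Γ))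
              (E₀ := [.Lt none, .ML, .Lt (some b')])
              (s₁ := .Lt none ::
                (List.map (fun a => (FCls.Lt (some a) : FCls Q Γ)) γ).reverse)
              (s₂ := []) hq (lettersL₁ _) letters_nil (mem_blankLL hδ)
            simpa [enc, V, curC] using key
        | some a₁ =>
            refine ⟨true, by simp [Face], ?_⟩
            have key := passL_total (M := M) (x := some a₁)
              (E₀ := [.ML, .Lt (some b')])
              (s₁ := .Lt none ::
                (List.map (fun a => (FCls.Lt (some a) : FCls Q Γ)) γ).reverse)
              (s₂ := (List.map (fun a => (FCls.Lt (some a) : FCls Q Γ)) []).reverse ++ [.Lt none])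
              hq (lettersL₁ _) (lettersL₂ _) (mem_transLL hδ)
            simpa [enc, V, curC] using key
  | @moveREnd q α b q' b' hδ =>
      cases dir
      · cases b with
        | none =>
            refine ⟨false, by simp [Face], ?_⟩
            have key := passR_total (M := M) (x := (none : Option Γ))
              (E₀ := [.Lt none, .MR, .Lt (some b')])
              (s₁ := .Lt none :: List.map (fun a => (FCls.Lt (some a) : FCls Q Γ)) α)
              (s₂ := []) hq (lettersR₁ _) letters_nil (mem_blankRR hδ)
            simpa [enc, V, curC] using key
        | some a₁ =>
            refine ⟨false, by simp [Face], ?_⟩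
            have key := passR_total (M := M) (x := some a₁)
              (E₀ := [.MR, .Lt (some b')])
              (s₁ := .Lt none :: List.map (fun a => (FCls.Lt (some a) : FCls Q Γ)) α)
              (s₂ := List.map (fun a => (FCls.Lt (some a) : FCls Q Γ)) [] ++ [.Lt none])
              hq (lettersR₁ _) (lettersR₂ _) (mem_transRR hδ)
            simpa [enc, V, curC] using key
      · cases b with
        | none =>
            simp [Face] at hface
            refine ⟨false, by simp [Face], ?_⟩
            have key := passL_total (M := M) (x := (none : Option Γ))
              (E₀ := [.Lt none, .Lt (some b'), .MR])
              (s₁ := .Lt none ::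
                (List.map (fun a => (FCls.Lt (some a) : FCls Q Γ)) []).reverse)
              (s₂ := []) hq (lettersL₁ _) letters_nil (mem_blankRL hδ)
            simpa [enc, V, curC, hface] using key
        | some a₁ =>
            refine ⟨false, by simp [Face], ?_⟩
            have key := passL_total (M := M) (x := some a₁)
              (E₀ := [.Lt (some b'), .MR])
              (s₁ := .Lt none ::
                (List.map (fun a => (FCls.Lt (some a) : FCls Q Γ)) []).reverse)
              (s₂ := (List.map (fun a => (FCls.Lt (some a) : FCls Q Γ)) α).reverse ++ [.Lt none])
              hq (lettersL₁ _) (lettersL₂ _) (mem_transRL hδ)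
            simpa [enc, V, curC] using key

end Trigger

/-! ### Simulation of full runs -/

section SimRun

variable {M}

theorem sim_step {c c' : TMCfg Q Γ} {dir mf : Bool} (hq : c.state ≠ M.halt)
    (hface : Face mf c) (hstep : TMStep M c c') :
    ∃ dir' mf', Face mf' c' ∧
      Relation.TransGen (UStep (Fig4 M)) (enc dir mf c) (enc dir' mf' c') := by
  by_cases h : mf = dir
  · subst h
    obtain ⟨mf', h1, h2⟩ := pass_trigger hq hface hstep
    exact ⟨!mf, mf', h1, h2⟩
  · have hskip := pass_skip (M := M) (c := c) (mf := mf) (dir := dir) hq h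
    have h2 : mf = !dir := by revert h; cases mf <;> cases dir <;> simp
    subst h2
    obtain ⟨mf', h1, h3⟩ := pass_trigger (dir := !dir) hq hface hstep
    exact ⟨!!dir, mf', h1, hskip.trans h3⟩

theorem halt_end {c : TMCfg Q Γ} (dir mf : Bool) (hq : c.state = M.halt) :
    Relation.ReflTransGen (UStep (Fig4 M)) (enc dir mf c) none := by
  cases dir
  · rw [enc]; simp only [if_neg Bool.false_ne_true]
    rw [hq]; exact halt_endL _
  · rw [enc]; simp only [if_pos rfl]
    rw [hq]; exact halt_endR _

theorem sim_run {c₀ c : TMCfg Q Γ} (hrun : Relation.ReflTransGen (TMStep M) c₀ c)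
    {mf₀ : Bool} (hface₀ : Face mf₀ c₀) (dir₀ : Bool) :
    Relation.ReflTransGen (UStep (Fig4 M)) (enc dir₀ mf₀ c₀) none ∨
      ∃ dir mf, Face mf c ∧
        Relation.ReflTransGen (UStep (Fig4 M)) (enc dir₀ mf₀ c₀) (enc dir mf c) := by
  induction hrun with
  | refl => exact Or.inr ⟨dir₀, mf₀, hface₀, .refl⟩
  | @tail b c hb hstep ih =>
      rcases ih with h | ⟨dir, mf, hface, hrun'⟩
      · exact Or.inl h
      · by_cases hq : b.state = M.halt
        · exact Or.inl (hrun'.trans (halt_end dir mf hq))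
        · obtain ⟨dir', mf', hface', h2⟩ := sim_step hq hface hstep
          exact Or.inr ⟨dir', mf', hface', hrun'.trans h2.to_reflTransGen⟩

/-- the initial subtyping configuration is a checkpoint -/
theorem initWord_eq (input : List Γ) :
    (some (initWord M input, [.E, .E]) : UConfig (FCls Q Γ)) =
      enc true true ⟨M.init, [], none, input⟩ := by
  have hp : ∀ l : List Γ, pcs (List.map (fun a => (FCls.Lt (some a) : FCls Q Γ)) l) =
      l.flatMap fun a => [.Lt (some a), .N] := by
    intro l; induction l with
    | nil => rfl
    | cons x l ih => simp [pcs, List.flatMap_cons] at *; exact ih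
  simp [initWord, enc, V, curC, ← List.map_reverse, hp]

/-- `TMHalts` gives the forward simulation to `•`. -/
theorem halts_to_none {input : List Γ} (h : TMHalts M input) :
    Relation.ReflTransGen (UStep (Fig4 M)) (some (initWord M input, [.E, .E])) none := by
  obtain ⟨c, hrun, hstate⟩ := h
  rw [initWord_eq]
  have hface : Face true (⟨M.init, [], none, input⟩ : TMCfg Q Γ) := by simp [Face]
  rcases sim_run hrun hface true with h | ⟨dir, mf, _, hrun'⟩
  · exact h
  · exact hrun'.trans (halt_end dir mf hstate)

/-! ### Totality of the Turing machine -/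

theorem tm_total (c : TMCfg Q Γ) : ∃ c', TMStep M c c' := by
  obtain ⟨q, α, b, γ⟩ := c
  have hd : M.δ q b = ((M.δ q b).1, (M.δ q b).2.1, (M.δ q b).2.2) := rfl
  rcases hdir : (M.δ q b).2.2 with _ | _ | _ <;> rw [hdir] at hd
  · rcases List.eq_nil_or_concat α with rfl | ⟨α₀, a, rfl⟩
    · exact ⟨_, .moveLEnd hd⟩
    · rw [List.concat_eq_append]; exact ⟨_, .moveL hd⟩
  · exact ⟨_, .stay hd⟩
  · cases γ with
    | nil => exact ⟨_, .moveREnd hd⟩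
    | cons c₀ γ => exact ⟨_, .moveR hd⟩

end SimRun

/-! ### Inversion of the inheritance relation -/

section Inversion

variable {M}

theorem delta_of_swapped {q : Q} {b : Option Γ} {q' : Q} {g : Γ} {d : Dir}
    (h : ((M.δ q b).1, (M.δ q b).2.1, (M.δ q b).2.2.swap) = (q', g, d)) :
    M.δ q b = (q', g, d.swap) := by
  have h1 : (M.δ q b).1 = q' := congrArg Prod.fst h
  have h2 : (M.δ q b).2.1 = g := congrArg (fun x => x.2.1) h
  have h3 : (M.δ q b).2.2.swap = d := congrArg (fun x => x.2.2) h
  have h4 : (M.δ q b).2.2 = d.swap := by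
    rw [← h3]; cases (M.δ q b).2.2 <;> rfl
  rw [← h1, ← h2, ← h4]

theorem uinh_cases {w v : List (FCls Q Γ)} (h : UInh (Fig4 M) w v) :
    ∃ u, (∃ q, w = .QwL q :: u ∧
        (v = [.ML, .N, .QL q] ++ u ∨
         v = [.MR, .N, .QwL q, .MR, .N] ++ u ∨
         (∃ a, v = [.Lt a, .N, .QwL q, .Lt a, .N] ++ u) ∨
         (q ≠ M.halt ∧ v = [.E, .QLR q, .N] ++ u) ∨
         (q = M.halt ∧ v = [.E, .E]))) ∨
      (∃ q, w = .QwR q :: u ∧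
        (v = [.MR, .N, .QR q] ++ u ∨
         v = [.ML, .N, .QwR q, .ML, .N] ++ u ∨
         (∃ a, v = [.Lt a, .N, .QwR q, .Lt a, .N] ++ u) ∨
         (q ≠ M.halt ∧ v = [.E, .QRL q, .N] ++ u) ∨
         (q = M.halt ∧ v = [.E, .E]))) ∨
      (w = .E :: u ∧ ∃ q,
         v = [.QLR q, .N, .QwR q, .E, .E] ++ u ∨ v = [.QRL q, .N, .QwL q, .E, .E] ++ u) ∨
      (∃ q, w = .QL q :: u ∧
        ((∃ a q' b, M.δ q (some a) = (q', b, .left) ∧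
            v = [.Lt (some a), .N, .QwL q', .ML, .N, .Lt (some b), .N] ++ u) ∨
         (∃ a q' b, M.δ q (some a) = (q', b, .stay) ∧
            v = [.Lt (some a), .N, .QwL q', .MR, .N, .Lt (some b), .N] ++ u) ∨
         (∃ a q' b, M.δ q (some a) = (q', b, .right) ∧
            v = [.Lt (some a), .N, .QwL q', .Lt (some b), .N, .MR, .N] ++ u) ∨
         (∃ q' b, M.δ q none = (q', b, .left) ∧
            v = [.Lt none, .N, .QwL q', .Lt none, .N, .ML, .N, .Lt (some b), .N] ++ u) ∨
         (∃ q' b, M.δ q none = (q', b, .stay) ∧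
            v = [.Lt none, .N, .QwL q', .Lt none, .N, .MR, .N, .Lt (some b), .N] ++ u) ∨
         (∃ q' b, M.δ q none = (q', b, .right) ∧
            v = [.Lt none, .N, .QwL q', .Lt none, .N, .Lt (some b), .N, .MR, .N] ++ u))) ∨
      (∃ q, w = .QR q :: u ∧
        ((∃ a q' b, M.δ q (some a) = (q', b, .right) ∧
            v = [.Lt (some a), .N, .QwR q', .MR, .N, .Lt (some b), .N] ++ u) ∨
         (∃ a q' b, M.δ q (some a) = (q', b, .stay) ∧
            v = [.Lt (some a), .N, .QwR q', .ML, .N, .Lt (some b), .N] ++ u) ∨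
         (∃ a q' b, M.δ q (some a) = (q', b, .left) ∧
            v = [.Lt (some a), .N, .QwR q', .Lt (some b), .N, .ML, .N] ++ u) ∨
         (∃ q' b, M.δ q none = (q', b, .right) ∧
            v = [.Lt none, .N, .QwR q', .Lt none, .N, .MR, .N, .Lt (some b), .N] ++ u) ∨
         (∃ q' b, M.δ q none = (q', b, .stay) ∧
            v = [.Lt none, .N, .QwR q', .Lt none, .N, .ML, .N, .Lt (some b), .N] ++ u) ∨
         (∃ q' b, M.δ q none = (q', b, .left) ∧
            v = [.Lt none, .N, .QwR q', .Lt none, .N, .Lt (some b), .N, .ML, .N] ++ u))) := by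
  obtain ⟨r, hr, u, rfl, rfl⟩ := h
  refine ⟨u, ?_⟩
  rcases hr with hr | ⟨r₀, hr₀, rfl⟩
  · cases hr with
    | waitHead q => exact Or.inl ⟨q, rfl, Or.inl (by simp)⟩
    | waitFar q => exact Or.inl ⟨q, rfl, Or.inr (Or.inl (by simp))⟩
    | waitLetter q a => exact Or.inl ⟨q, rfl, Or.inr (Or.inr (Or.inl ⟨a, by simp⟩))⟩
    | turn q hq => exact Or.inl ⟨q, rfl, Or.inr (Or.inr (Or.inr (Or.inl ⟨hq, by simp⟩)))⟩
    | halt => exact Or.inl ⟨M.halt, rfl, Or.inr (Or.inr (Or.inr (Or.inr ⟨rfl, by simp⟩)))⟩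
    | bounce q => exact Or.inr (Or.inr (Or.inl ⟨rfl, q, Or.inl (by simp)⟩))
    | transL h => exact Or.inr (Or.inr (Or.inr (Or.inl
        ⟨_, rfl, Or.inl ⟨_, _, _, h, by simp⟩⟩)))
    | transS h => exact Or.inr (Or.inr (Or.inr (Or.inl
        ⟨_, rfl, Or.inr (Or.inl ⟨_, _, _, h, by simp⟩)⟩)))
    | transR h => exact Or.inr (Or.inr (Or.inr (Or.inl
        ⟨_, rfl, Or.inr (Or.inr (Or.inl ⟨_, _, _, h, by simp⟩))⟩)))
    | blankL h => exact Or.inr (Or.inr (Or.inr (Or.inl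
        ⟨_, rfl, Or.inr (Or.inr (Or.inr (Or.inl ⟨_, _, h, by simp⟩)))⟩)))
    | blankS h => exact Or.inr (Or.inr (Or.inr (Or.inl
        ⟨_, rfl, Or.inr (Or.inr (Or.inr (Or.inr (Or.inl ⟨_, _, h, by simp⟩))))⟩)))
    | blankR h => exact Or.inr (Or.inr (Or.inr (Or.inl
        ⟨_, rfl, Or.inr (Or.inr (Or.inr (Or.inr (Or.inr ⟨_, _, h, by simp⟩))))⟩)))
  · cases hr₀ with
    | waitHead q => exact Or.inr (Or.inl ⟨q, rfl, Or.inl (by simp [URule.swapLR, FCls.swap])⟩)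
    | waitFar q => exact Or.inr (Or.inl ⟨q, rfl, Or.inr (Or.inl (by simp [URule.swapLR, FCls.swap]))⟩)
    | waitLetter q a =>
        exact Or.inr (Or.inl ⟨q, rfl, Or.inr (Or.inr (Or.inl ⟨a, by simp [URule.swapLR, FCls.swap]⟩))⟩)
    | turn q hq =>
        exact Or.inr (Or.inl ⟨q, rfl, Or.inr (Or.inr (Or.inr (Or.inl
          ⟨hq, by simp [URule.swapLR, FCls.swap]⟩)))⟩)
    | halt =>
        exact Or.inr (Or.inl ⟨M.halt, rfl, Or.inr (Or.inr (Or.inr (Or.inr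
          ⟨rfl, by simp [URule.swapLR, FCls.swap]⟩)))⟩)
    | bounce q =>
        exact Or.inr (Or.inr (Or.inl ⟨rfl, q, Or.inr (by simp [URule.swapLR, FCls.swap])⟩))
    | transL h =>
        exact Or.inr (Or.inr (Or.inr (Or.inr ⟨_, rfl, Or.inl
          ⟨_, _, _, delta_of_swapped h, by simp [URule.swapLR, FCls.swap]⟩⟩)))
    | transS h =>
        exact Or.inr (Or.inr (Or.inr (Or.inr ⟨_, rfl, Or.inr (Or.inl
          ⟨_, _, _, delta_of_swapped h, by simp [URule.swapLR, FCls.swap]⟩)⟩)))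
    | transR h =>
        exact Or.inr (Or.inr (Or.inr (Or.inr ⟨_, rfl, Or.inr (Or.inr (Or.inl
          ⟨_, _, _, delta_of_swapped h, by simp [URule.swapLR, FCls.swap]⟩))⟩)))
    | blankL h =>
        exact Or.inr (Or.inr (Or.inr (Or.inr ⟨_, rfl, Or.inr (Or.inr (Or.inr (Or.inl
          ⟨_, _, delta_of_swapped h, by simp [URule.swapLR, FCls.swap]⟩)))⟩)))
    | blankS h =>
        exact Or.inr (Or.inr (Or.inr (Or.inr ⟨_, rfl, Or.inr (Or.inr (Or.inr (Or.inr (Or.inl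
          ⟨_, _, delta_of_swapped h, by simp [URule.swapLR, FCls.swap]⟩))))⟩)))
    | blankR h =>
        exact Or.inr (Or.inr (Or.inr (Or.inr ⟨_, rfl, Or.inr (Or.inr (Or.inr (Or.inr (Or.inr
          ⟨_, _, delta_of_swapped h, by simp [URule.swapLR, FCls.swap]⟩))))⟩)))

end Inversion

/-! ### Catalogue of `◁*`-derivations -/

section Catalogue

variable {M}

theorem uinh_lhs_head {w v : List (FCls Q Γ)} (h : UInh (Fig4 M) w v) :
    ∃ u, (∃ q, w = .QwL q :: u) ∨ (∃ q, w = .QwR q :: u) ∨ (∃ q, w = .QL q :: u) ∨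
      (∃ q, w = .QR q :: u) ∨ w = .E :: u := by
  obtain ⟨u, h | h | h | h | h⟩ := uinh_cases h
  · exact ⟨u, Or.inl ⟨h.choose, h.choose_spec.1⟩⟩
  · exact ⟨u, Or.inr (Or.inl ⟨h.choose, h.choose_spec.1⟩)⟩
  · exact ⟨u, Or.inr (Or.inr (Or.inr (Or.inr h.1)))⟩
  · exact ⟨u, Or.inr (Or.inr (Or.inl ⟨h.choose, h.choose_spec.1⟩))⟩
  · exact ⟨u, Or.inr (Or.inr (Or.inr (Or.inl ⟨h.choose, h.choose_spec.1⟩)))⟩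

theorem uinh_rhs_head {w v : List (FCls Q Γ)} (h : UInh (Fig4 M) w v) :
    ∃ u', v = .ML :: u' ∨ v = .MR :: u' ∨ (∃ a, v = .Lt a :: u') ∨ v = .E :: u' ∨
      (∃ q, v = .QLR q :: u') ∨ (∃ q, v = .QRL q :: u') := by
  obtain ⟨u, h | h | h | h | h⟩ := uinh_cases h
  · obtain ⟨q, -, h | h | ⟨a, h⟩ | ⟨-, h⟩ | ⟨-, h⟩⟩ := h
    · exact ⟨_, Or.inl h⟩
    · exact ⟨_, Or.inr (Or.inl h)⟩
    · exact ⟨_, Or.inr (Or.inr (Or.inl ⟨a, h⟩))⟩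
    · exact ⟨_, Or.inr (Or.inr (Or.inr (Or.inl h)))⟩
    · exact ⟨_, Or.inr (Or.inr (Or.inr (Or.inl h)))⟩
  · obtain ⟨q, -, h | h | ⟨a, h⟩ | ⟨-, h⟩ | ⟨-, h⟩⟩ := h
    · exact ⟨_, Or.inr (Or.inl h)⟩
    · exact ⟨_, Or.inl h⟩
    · exact ⟨_, Or.inr (Or.inr (Or.inl ⟨a, h⟩))⟩
    · exact ⟨_, Or.inr (Or.inr (Or.inr (Or.inl h)))⟩
    · exact ⟨_, Or.inr (Or.inr (Or.inr (Or.inl h)))⟩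
  · obtain ⟨-, q, h | h⟩ := h
    · exact ⟨_, Or.inr (Or.inr (Or.inr (Or.inr (Or.inl ⟨q, h⟩))))⟩
    · exact ⟨_, Or.inr (Or.inr (Or.inr (Or.inr (Or.inr ⟨q, h⟩))))⟩
  · obtain ⟨q, -, ⟨a,q',b,-,h⟩ | ⟨a,q',b,-,h⟩ | ⟨a,q',b,-,h⟩ | ⟨q',b,-,h⟩ | ⟨q',b,-,h⟩ | ⟨q',b,-,h⟩⟩ := h
    all_goals exact ⟨_, Or.inr (Or.inr (Or.inl ⟨_, h⟩))⟩
  · obtain ⟨q, -, ⟨a,q',b,-,h⟩ | ⟨a,q',b,-,h⟩ | ⟨a,q',b,-,h⟩ | ⟨q',b,-,h⟩ | ⟨q',b,-,h⟩ | ⟨q',b,-,h⟩⟩ := h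
    all_goals exact ⟨_, Or.inr (Or.inr (Or.inl ⟨_, h⟩))⟩

/-- every derivation has length at most 2 -/
theorem star_inv {w v : List (FCls Q Γ)} (h : UInhStar (Fig4 M) w v) :
    v = w ∨ UInh (Fig4 M) w v ∨
      ∃ w₁, UInh (Fig4 M) w w₁ ∧ UInh (Fig4 M) w₁ v := by
  rcases h.cases_head with rfl | ⟨w₁, h1, hrest⟩
  · exact Or.inl rfl
  rcases hrest.cases_head with rfl | ⟨w₂, h2, hrest2⟩
  · exact Or.inr (Or.inl h1)
  rcases hrest2.cases_head with rfl | ⟨w₃, h3, -⟩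
  · exact Or.inr (Or.inr ⟨w₁, h1, h2⟩)
  · -- show that a three-step derivation is impossible
    exfalso
    obtain ⟨u', hv1⟩ := uinh_rhs_head h1
    obtain ⟨u₂, hw2⟩ := uinh_lhs_head h2
    -- w₁ must be E-headed
    have hE : ∃ uu, w₁ = FCls.E :: uu := by
      rcases hv1 with h | h | ⟨a, h⟩ | h | ⟨p, h⟩ | ⟨p, h⟩ <;>
        rcases hw2 with ⟨p₂, h'⟩ | ⟨p₂, h'⟩ | ⟨p₂, h'⟩ | ⟨p₂, h'⟩ | h' <;> simp_all
    obtain ⟨uu, rfl⟩ := hE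
    -- then w₂ is QLR/QRL-headed, so no rule applies
    obtain ⟨u₃, hc⟩ := uinh_cases h2
    obtain ⟨u₄, hw3⟩ := uinh_lhs_head h3
    rcases hc with ⟨p, h', -⟩ | ⟨p, h', -⟩ | ⟨-, p, h' | h'⟩ | ⟨p, h', -⟩ | ⟨p, h', -⟩ <;>
      rcases hw3 with ⟨p₂, h''⟩ | ⟨p₂, h''⟩ | ⟨p₂, h''⟩ | ⟨p₂, h''⟩ | h'' <;> simp_all

end Catalogue

/-! ### Determinism -/

section Det

variable {M}

theorem uinh_dead {c : FCls Q Γ} {u v : List (FCls Q Γ)} (h : UInh (Fig4 M) (c :: u) v)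
    (h1 : ∀ q, c ≠ .QwL q) (h2 : ∀ q, c ≠ .QwR q) (h3 : ∀ q, c ≠ .QL q)
    (h4 : ∀ q, c ≠ .QR q) (h5 : c ≠ .E) : False := by
  obtain ⟨u₂, hh⟩ := uinh_lhs_head h
  rcases hh with ⟨q, hh⟩ | ⟨q, hh⟩ | ⟨q, hh⟩ | ⟨q, hh⟩ | hh <;> simp_all

theorem star_dead {c : FCls Q Γ} {u v : List (FCls Q Γ)}
    (h : UInhStar (Fig4 M) (c :: u) v)
    (h1 : ∀ q, c ≠ .QwL q) (h2 : ∀ q, c ≠ .QwR q) (h3 : ∀ q, c ≠ .QL q)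
    (h4 : ∀ q, c ≠ .QR q) (h5 : c ≠ .E) : v = c :: u := by
  rcases h.cases_head with rfl | ⟨w₁, hs, -⟩
  · rfl
  · exact absurd hs fun hs => uinh_dead hs h1 h2 h3 h4 h5

theorem cat_E {u v : List (FCls Q Γ)} (h : UInhStar (Fig4 M) (.E :: u) v) :
    v = .E :: u ∨ ∃ q, v = [.QLR q, .N, .QwR q, .E, .E] ++ u ∨
      v = [.QRL q, .N, .QwL q, .E, .E] ++ u := by
  rcases h.cases_head with rfl | ⟨w₁, h1, hrest⟩
  · exact Or.inl rfl
  obtain ⟨u₂, hc⟩ := uinh_cases h1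
  rcases hc with ⟨q, hq, -⟩ | ⟨q, hq, -⟩ | ⟨hq, q, hv | hv⟩ | ⟨q, hq, -⟩ | ⟨q, hq, -⟩
  · simp_all
  · simp_all
  · obtain ⟨rfl⟩ : u = u₂ := by simpa using hq
    subst hv
    have := star_dead hrest (by simp) (by simp) (by simp) (by simp) (by simp)
    exact Or.inr ⟨q, Or.inl this⟩
  · obtain ⟨rfl⟩ : u = u₂ := by simpa using hq
    subst hv
    have := star_dead hrest (by simp) (by simp) (by simp) (by simp) (by simp)
    exact Or.inr ⟨q, Or.inr this⟩
  · simp_all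
  · simp_all

theorem cat_QL {q : Q} {u v : List (FCls Q Γ)} (h : UInhStar (Fig4 M) (.QL q :: u) v) :
    v = .QL q :: u ∨
    (∃ a q' b, M.δ q (some a) = (q', b, .left) ∧
        v = [.Lt (some a), .N, .QwL q', .ML, .N, .Lt (some b), .N] ++ u) ∨
    (∃ a q' b, M.δ q (some a) = (q', b, .stay) ∧
        v = [.Lt (some a), .N, .QwL q', .MR, .N, .Lt (some b), .N] ++ u) ∨
    (∃ a q' b, M.δ q (some a) = (q', b, .right) ∧
        v = [.Lt (some a), .N, .QwL q', .Lt (some b), .N, .MR, .N] ++ u) ∨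
    (∃ q' b, M.δ q none = (q', b, .left) ∧
        v = [.Lt none, .N, .QwL q', .Lt none, .N, .ML, .N, .Lt (some b), .N] ++ u) ∨
    (∃ q' b, M.δ q none = (q', b, .stay) ∧
        v = [.Lt none, .N, .QwL q', .Lt none, .N, .MR, .N, .Lt (some b), .N] ++ u) ∨
    (∃ q' b, M.δ q none = (q', b, .right) ∧
        v = [.Lt none, .N, .QwL q', .Lt none, .N, .Lt (some b), .N, .MR, .N] ++ u) := by
  rcases h.cases_head with rfl | ⟨w₁, h1, hrest⟩
  · exact Or.inl rfl
  obtain ⟨u₂, hc⟩ := uinh_cases h1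
  rcases hc with ⟨p, hp, -⟩ | ⟨p, hp, -⟩ | ⟨hp, -⟩ | ⟨p, hp, hd⟩ | ⟨p, hp, -⟩
  · simp_all
  · simp_all
  · simp_all
  · obtain ⟨rfl, rfl⟩ : q = p ∧ u = u₂ := by simpa using hp
    have hv : v = w₁ := by
      rcases hd with ⟨a,q',b,-,rfl⟩ | ⟨a,q',b,-,rfl⟩ | ⟨a,q',b,-,rfl⟩ |
        ⟨q',b,-,rfl⟩ | ⟨q',b,-,rfl⟩ | ⟨q',b,-,rfl⟩ <;>
        exact star_dead hrest (by simp) (by simp) (by simp) (by simp) (by simp)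
    subst hv
    rcases hd with ⟨a,q',b,hδ,rfl⟩ | ⟨a,q',b,hδ,rfl⟩ | ⟨a,q',b,hδ,rfl⟩ |
      ⟨q',b,hδ,rfl⟩ | ⟨q',b,hδ,rfl⟩ | ⟨q',b,hδ,rfl⟩
    · exact Or.inr (Or.inl ⟨a, q', b, hδ, rfl⟩)
    · exact Or.inr (Or.inr (Or.inl ⟨a, q', b, hδ, rfl⟩))
    · exact Or.inr (Or.inr (Or.inr (Or.inl ⟨a, q', b, hδ, rfl⟩)))
    · exact Or.inr (Or.inr (Or.inr (Or.inr (Or.inl ⟨q', b, hδ, rfl⟩))))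
    · exact Or.inr (Or.inr (Or.inr (Or.inr (Or.inr (Or.inl ⟨q', b, hδ, rfl⟩)))))
    · exact Or.inr (Or.inr (Or.inr (Or.inr (Or.inr (Or.inr ⟨q', b, hδ, rfl⟩)))))
  · simp_all

theorem cat_QR {q : Q} {u v : List (FCls Q Γ)} (h : UInhStar (Fig4 M) (.QR q :: u) v) :
    v = .QR q :: u ∨
    (∃ a q' b, M.δ q (some a) = (q', b, .right) ∧
        v = [.Lt (some a), .N, .QwR q', .MR, .N, .Lt (some b), .N] ++ u) ∨
    (∃ a q' b, M.δ q (some a) = (q', b, .stay) ∧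
        v = [.Lt (some a), .N, .QwR q', .ML, .N, .Lt (some b), .N] ++ u) ∨
    (∃ a q' b, M.δ q (some a) = (q', b, .left) ∧
        v = [.Lt (some a), .N, .QwR q', .Lt (some b), .N, .ML, .N] ++ u) ∨
    (∃ q' b, M.δ q none = (q', b, .right) ∧
        v = [.Lt none, .N, .QwR q', .Lt none, .N, .MR, .N, .Lt (some b), .N] ++ u) ∨
    (∃ q' b, M.δ q none = (q', b, .stay) ∧
        v = [.Lt none, .N, .QwR q', .Lt none, .N, .ML, .N, .Lt (some b), .N] ++ u) ∨
    (∃ q' b, M.δ q none = (q', b, .left) ∧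
        v = [.Lt none, .N, .QwR q', .Lt none, .N, .Lt (some b), .N, .ML, .N] ++ u) := by
  rcases h.cases_head with rfl | ⟨w₁, h1, hrest⟩
  · exact Or.inl rfl
  obtain ⟨u₂, hc⟩ := uinh_cases h1
  rcases hc with ⟨p, hp, -⟩ | ⟨p, hp, -⟩ | ⟨hp, -⟩ | ⟨p, hp, -⟩ | ⟨p, hp, hd⟩
  · simp_all
  · simp_all
  · simp_all
  · simp_all
  · obtain ⟨rfl, rfl⟩ : q = p ∧ u = u₂ := by simpa using hp
    have hv : v = w₁ := by
      rcases hd with ⟨a,q',b,-,rfl⟩ | ⟨a,q',b,-,rfl⟩ | ⟨a,q',b,-,rfl⟩ |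
        ⟨q',b,-,rfl⟩ | ⟨q',b,-,rfl⟩ | ⟨q',b,-,rfl⟩ <;>
        exact star_dead hrest (by simp) (by simp) (by simp) (by simp) (by simp)
    subst hv
    rcases hd with ⟨a,q',b,hδ,rfl⟩ | ⟨a,q',b,hδ,rfl⟩ | ⟨a,q',b,hδ,rfl⟩ |
      ⟨q',b,hδ,rfl⟩ | ⟨q',b,hδ,rfl⟩ | ⟨q',b,hδ,rfl⟩
    · exact Or.inr (Or.inl ⟨a, q', b, hδ, rfl⟩)
    · exact Or.inr (Or.inr (Or.inl ⟨a, q', b, hδ, rfl⟩))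
    · exact Or.inr (Or.inr (Or.inr (Or.inl ⟨a, q', b, hδ, rfl⟩)))
    · exact Or.inr (Or.inr (Or.inr (Or.inr (Or.inl ⟨q', b, hδ, rfl⟩))))
    · exact Or.inr (Or.inr (Or.inr (Or.inr (Or.inr (Or.inl ⟨q', b, hδ, rfl⟩)))))
    · exact Or.inr (Or.inr (Or.inr (Or.inr (Or.inr (Or.inr ⟨q', b, hδ, rfl⟩)))))

theorem cat_QwL {q : Q} {u v : List (FCls Q Γ)} (h : UInhStar (Fig4 M) (.QwL q :: u) v) :
    v = .QwL q :: u ∨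
    v = [.ML, .N, .QL q] ++ u ∨
    v = [.MR, .N, .QwL q, .MR, .N] ++ u ∨
    (∃ a, v = [.Lt a, .N, .QwL q, .Lt a, .N] ++ u) ∨
    (q ≠ M.halt ∧ v = [.E, .QLR q, .N] ++ u) ∨
    (q = M.halt ∧ v = [.E, .E]) ∨
    (q ≠ M.halt ∧ ∃ p, v = [.QLR p, .N, .QwR p, .E, .E, .QLR q, .N] ++ u ∨
        v = [.QRL p, .N, .QwL p, .E, .E, .QLR q, .N] ++ u) ∨
    (q = M.halt ∧ ∃ p, v = [.QLR p, .N, .QwR p, .E, .E, .E] ∨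
        v = [.QRL p, .N, .QwL p, .E, .E, .E]) := by
  rcases h.cases_head with rfl | ⟨w₁, h1, hrest⟩
  · exact Or.inl rfl
  obtain ⟨u₂, hc⟩ := uinh_cases h1
  rcases hc with ⟨p, hp, hd⟩ | ⟨p, hp, -⟩ | ⟨hp, -⟩ | ⟨p, hp, -⟩ | ⟨p, hp, -⟩
  · obtain ⟨rfl, rfl⟩ : q = p ∧ u = u₂ := by simpa using hp
    rcases hd with rfl | rfl | ⟨a, rfl⟩ | ⟨hq, rfl⟩ | ⟨hq, rfl⟩
    · exact Or.inr (Or.inl (star_dead hrest (by simp) (by simp) (by simp) (by simp) (by simp)))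
    · exact Or.inr (Or.inr (Or.inl
        (star_dead hrest (by simp) (by simp) (by simp) (by simp) (by simp))))
    · exact Or.inr (Or.inr (Or.inr (Or.inl
        ⟨a, star_dead hrest (by simp) (by simp) (by simp) (by simp) (by simp)⟩)))
    · rcases cat_E hrest with rfl | ⟨p₂, rfl | rfl⟩
      · exact Or.inr (Or.inr (Or.inr (Or.inr (Or.inl ⟨hq, rfl⟩))))
      · exact Or.inr (Or.inr (Or.inr (Or.inr (Or.inr (Or.inr (Or.inl
          ⟨hq, p₂, Or.inl rfl⟩))))))
      · exact Or.inr (Or.inr (Or.inr (Or.inr (Or.inr (Or.inr (Or.inl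
          ⟨hq, p₂, Or.inr rfl⟩))))))
    · rcases cat_E hrest with rfl | ⟨p₂, rfl | rfl⟩
      · exact Or.inr (Or.inr (Or.inr (Or.inr (Or.inr (Or.inl ⟨hq, rfl⟩)))))
      · exact Or.inr (Or.inr (Or.inr (Or.inr (Or.inr (Or.inr (Or.inr
          ⟨hq, p₂, Or.inl rfl⟩))))))
      · exact Or.inr (Or.inr (Or.inr (Or.inr (Or.inr (Or.inr (Or.inr
          ⟨hq, p₂, Or.inr rfl⟩))))))
  · simp_all
  · simp_all
  · simp_all
  · simp_all

theorem cat_QwR {q : Q} {u v : List (FCls Q Γ)} (h : UInhStar (Fig4 M) (.QwR q :: u) v) :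
    v = .QwR q :: u ∨
    v = [.MR, .N, .QR q] ++ u ∨
    v = [.ML, .N, .QwR q, .ML, .N] ++ u ∨
    (∃ a, v = [.Lt a, .N, .QwR q, .Lt a, .N] ++ u) ∨
    (q ≠ M.halt ∧ v = [.E, .QRL q, .N] ++ u) ∨
    (q = M.halt ∧ v = [.E, .E]) ∨
    (q ≠ M.halt ∧ ∃ p, v = [.QLR p, .N, .QwR p, .E, .E, .QRL q, .N] ++ u ∨
        v = [.QRL p, .N, .QwL p, .E, .E, .QRL q, .N] ++ u) ∨
    (q = M.halt ∧ ∃ p, v = [.QLR p, .N, .QwR p, .E, .E, .E] ∨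
        v = [.QRL p, .N, .QwL p, .E, .E, .E]) := by
  rcases h.cases_head with rfl | ⟨w₁, h1, hrest⟩
  · exact Or.inl rfl
  obtain ⟨u₂, hc⟩ := uinh_cases h1
  rcases hc with ⟨p, hp, -⟩ | ⟨p, hp, hd⟩ | ⟨hp, -⟩ | ⟨p, hp, -⟩ | ⟨p, hp, -⟩
  · simp_all
  · obtain ⟨rfl, rfl⟩ : q = p ∧ u = u₂ := by simpa using hp
    rcases hd with rfl | rfl | ⟨a, rfl⟩ | ⟨hq, rfl⟩ | ⟨hq, rfl⟩
    · exact Or.inr (Or.inl (star_dead hrest (by simp) (by simp) (by simp) (by simp) (by simp)))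
    · exact Or.inr (Or.inr (Or.inl
        (star_dead hrest (by simp) (by simp) (by simp) (by simp) (by simp))))
    · exact Or.inr (Or.inr (Or.inr (Or.inl
        ⟨a, star_dead hrest (by simp) (by simp) (by simp) (by simp) (by simp)⟩)))
    · rcases cat_E hrest with rfl | ⟨p₂, rfl | rfl⟩
      · exact Or.inr (Or.inr (Or.inr (Or.inr (Or.inl ⟨hq, rfl⟩))))
      · exact Or.inr (Or.inr (Or.inr (Or.inr (Or.inr (Or.inr (Or.inl
          ⟨hq, p₂, Or.inl rfl⟩))))))
      · exact Or.inr (Or.inr (Or.inr (Or.inr (Or.inr (Or.inr (Or.inl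
          ⟨hq, p₂, Or.inr rfl⟩))))))
    · rcases cat_E hrest with rfl | ⟨p₂, rfl | rfl⟩
      · exact Or.inr (Or.inr (Or.inr (Or.inr (Or.inr (Or.inl ⟨hq, rfl⟩)))))
      · exact Or.inr (Or.inr (Or.inr (Or.inr (Or.inr (Or.inr (Or.inr
          ⟨hq, p₂, Or.inl rfl⟩))))))
      · exact Or.inr (Or.inr (Or.inr (Or.inr (Or.inr (Or.inr (Or.inr
          ⟨hq, p₂, Or.inr rfl⟩))))))
  · simp_all
  · simp_all
  · simp_all

end Det

section Det2

variable {M}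

theorem star_det {w : List (FCls Q Γ)} {d : FCls Q Γ} {e₁ e₂ : List (FCls Q Γ)}
    (h₁ : UInhStar (Fig4 M) w (d :: e₁)) (h₂ : UInhStar (Fig4 M) w (d :: e₂)) :
    e₁ = e₂ := by
  cases w with
  | nil =>
      rcases h₁.cases_head with h | ⟨w₁, hs, -⟩
      · simp at h
      · obtain ⟨u₂, hh⟩ := uinh_lhs_head hs
        rcases hh with ⟨p, hh⟩ | ⟨p, hh⟩ | ⟨p, hh⟩ | ⟨p, hh⟩ | hh <;> simp_all
  | cons c u =>
      cases c with
      | N =>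
          have a₁ := star_dead h₁ (by simp) (by simp) (by simp) (by simp) (by simp)
          have a₂ := star_dead h₂ (by simp) (by simp) (by simp) (by simp) (by simp)
          simp_all
      | ML =>
          have a₁ := star_dead h₁ (by simp) (by simp) (by simp) (by simp) (by simp)
          have a₂ := star_dead h₂ (by simp) (by simp) (by simp) (by simp) (by simp)
          simp_all
      | MR =>
          have a₁ := star_dead h₁ (by simp) (by simp) (by simp) (by simp) (by simp)
          have a₂ := star_dead h₂ (by simp) (by simp) (by simp) (by simp) (by simp)
          simp_all
      | Lt a =>
          have a₁ := star_dead h₁ (by simp) (by simp) (by simp) (by simp) (by simp)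
          have a₂ := star_dead h₂ (by simp) (by simp) (by simp) (by simp) (by simp)
          simp_all
      | QLR p =>
          have a₁ := star_dead h₁ (by simp) (by simp) (by simp) (by simp) (by simp)
          have a₂ := star_dead h₂ (by simp) (by simp) (by simp) (by simp) (by simp)
          simp_all
      | QRL p =>
          have a₁ := star_dead h₁ (by simp) (by simp) (by simp) (by simp) (by simp)
          have a₂ := star_dead h₂ (by simp) (by simp) (by simp) (by simp) (by simp)
          simp_all
      | E =>
          rcases cat_E h₁ with h | ⟨p, h | h⟩ <;>
            rcases cat_E h₂ with h' | ⟨p', h' | h'⟩ <;> simp_all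
      | QL q =>
          rcases cat_QL h₁ with h | ⟨a,q',b,hδ,h⟩ | ⟨a,q',b,hδ,h⟩ | ⟨a,q',b,hδ,h⟩ |
              ⟨q',b,hδ,h⟩ | ⟨q',b,hδ,h⟩ | ⟨q',b,hδ,h⟩ <;>
            rcases cat_QL h₂ with h' | ⟨a₂,q₂,b₂,hδ₂,h'⟩ | ⟨a₂,q₂,b₂,hδ₂,h'⟩ |
              ⟨a₂,q₂,b₂,hδ₂,h'⟩ | ⟨q₂,b₂,hδ₂,h'⟩ | ⟨q₂,b₂,hδ₂,h'⟩ | ⟨q₂,b₂,hδ₂,h'⟩ <;>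
            simp_all
      | QR q =>
          rcases cat_QR h₁ with h | ⟨a,q',b,hδ,h⟩ | ⟨a,q',b,hδ,h⟩ | ⟨a,q',b,hδ,h⟩ |
              ⟨q',b,hδ,h⟩ | ⟨q',b,hδ,h⟩ | ⟨q',b,hδ,h⟩ <;>
            rcases cat_QR h₂ with h' | ⟨a₂,q₂,b₂,hδ₂,h'⟩ | ⟨a₂,q₂,b₂,hδ₂,h'⟩ |
              ⟨a₂,q₂,b₂,hδ₂,h'⟩ | ⟨q₂,b₂,hδ₂,h'⟩ | ⟨q₂,b₂,hδ₂,h'⟩ | ⟨q₂,b₂,hδ₂,h'⟩ <;>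
            simp_all
      | QwL q =>
          rcases cat_QwL h₁ with h | h | h | ⟨a, h⟩ | ⟨hq, h⟩ | ⟨hq, h⟩ |
              ⟨hq, p, h | h⟩ | ⟨hq, p, h | h⟩ <;>
            rcases cat_QwL h₂ with h' | h' | h' | ⟨a₂, h'⟩ | ⟨hq₂, h'⟩ | ⟨hq₂, h'⟩ |
              ⟨hq₂, p₂, h' | h'⟩ | ⟨hq₂, p₂, h' | h'⟩ <;>
            simp_all
      | QwR q =>
          rcases cat_QwR h₁ with h | h | h | ⟨a, h⟩ | ⟨hq, h⟩ | ⟨hq, h⟩ |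
              ⟨hq, p, h | h⟩ | ⟨hq, p, h | h⟩ <;>
            rcases cat_QwR h₂ with h' | h' | h' | ⟨a₂, h'⟩ | ⟨hq₂, h'⟩ | ⟨hq₂, h'⟩ |
              ⟨hq₂, p₂, h' | h'⟩ | ⟨hq₂, p₂, h' | h'⟩ <;>
            simp_all

theorem ustep_det {c c₁ c₂ : UConfig (FCls Q Γ)}
    (h₁ : UStep (Fig4 M) c c₁) (h₂ : UStep (Fig4 M) c c₂) : c₁ = c₂ := by
  cases h₁ with
  | halt h =>
      cases h₂ with
      | halt h' => rfl
  | move h =>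
      cases h₂ with
      | move h' => rw [star_det h h']

end Det2

/-! ### The non-halting case -/

section NoHalt

variable {M}

theorem StepsN.append {α : Type*} {R : α → α → Prop} {m n : ℕ} {a b c : α}
    (h1 : StepsN R m a b) (h2 : StepsN R n b c) : StepsN R (m + n) a c := by
  induction h1 with
  | refl => simpa using h2
  | head h _ ih => rw [Nat.add_right_comm]; exact .head h (ih h2)

/-- an infinite run of the Turing machine -/
noncomputable def tmRun (c₀ : TMCfg Q Γ) : ℕ → TMCfg Q Γ :=
  fun n => (fun c => Classical.choose (tm_total (M := M) c))^[n] c₀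

theorem tmRun_zero (c₀ : TMCfg Q Γ) : tmRun (M := M) c₀ 0 = c₀ := rfl

theorem tmRun_step (c₀ : TMCfg Q Γ) (n : ℕ) :
    TMStep M (tmRun (M := M) c₀ n) (tmRun (M := M) c₀ (n + 1)) := by
  have : tmRun (M := M) c₀ (n + 1) = Classical.choose (tm_total (M := M) (tmRun (M := M) c₀ n)) :=
    Function.iterate_succ_apply' _ n c₀
  rw [this]
  exact Classical.choose_spec (tm_total (M := M) (tmRun (M := M) c₀ n))

theorem tmRun_reach (c₀ : TMCfg Q Γ) (n : ℕ) :
    Relation.ReflTransGen (TMStep M) c₀ (tmRun (M := M) c₀ n) := by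
  induction n with
  | zero => exact .refl
  | succ n ih => exact ih.tail (tmRun_step (M := M) c₀ n)

theorem not_halts_no_stuck {input : List Γ} (hnh : ¬ TMHalts M input) :
    ∀ cfg, Relation.ReflTransGen (UStep (Fig4 M))
        (some (initWord M input, [.E, .E])) cfg →
      ∃ cfg', UStep (Fig4 M) cfg cfg' := by
  set c₀ : TMCfg Q Γ := ⟨M.init, [], none, input⟩ with hc₀
  set cfgI : UConfig (FCls Q Γ) := some (initWord M input, [.E, .E]) with hcfgI
  have hstate : ∀ n, (tmRun (M := M) c₀ n).state ≠ M.halt := by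
    intro n h
    exact hnh ⟨tmRun (M := M) c₀ n, tmRun_reach (M := M) c₀ n, h⟩
  intro cfg hreach
  by_contra hstuck
  have hstuck' : Stuck (UStep (Fig4 M)) cfg := hstuck
  have hall : ∀ b, Relation.ReflTransGen (UStep (Fig4 M)) cfgI b →
      Relation.ReflTransGen (UStep (Fig4 M)) b cfg :=
    fun b hb => det_reach_stuck (R := UStep (Fig4 M)) (fun h1 h2 => ustep_det h1 h2) hstuck' hreach hb
  -- descent on the number of steps remaining
  have down : ∀ m : ℕ, ∀ (dir mf : Bool) (n : ℕ), Face mf (tmRun (M := M) c₀ n) →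
      Relation.ReflTransGen (UStep (Fig4 M)) cfgI (enc dir mf (tmRun (M := M) c₀ n)) →
      StepsN (UStep (Fig4 M)) m (enc dir mf (tmRun (M := M) c₀ n)) cfg → False := by
    intro m
    induction m using Nat.strong_induction_on with
    | _ m ih =>
        intro dir mf n hface hreach' hm
        obtain ⟨dir', mf', hface', hstep⟩ :=
          sim_step (dir := dir) (hstate n) hface (tmRun_step (M := M) c₀ n)
        obtain ⟨k, hk⟩ := transGen_iff_stepsN.mp hstep
        have hreach'' : Relation.ReflTransGen (UStep (Fig4 M)) cfgI
            (enc dir' mf' (tmRun (M := M) c₀ (n + 1))) :=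
          hreach'.trans hstep.to_reflTransGen
        obtain ⟨m', hm'⟩ := reflTransGen_iff_stepsN.mp (hall _ hreach'')
        have htot := hk.append hm'
        have := stepsN_unique (R := UStep (Fig4 M)) (fun h1 h2 => ustep_det h1 h2) hstuck' hm htot
        exact ih m' (by omega) dir' mf' (n + 1) hface' hreach'' hm'
  have hface₀ : Face true c₀ := by simp [Face, hc₀]
  have hI : cfgI = enc true true (tmRun (M := M) c₀ 0) := initWord_eq input
  obtain ⟨m, hm⟩ := reflTransGen_iff_stepsN.mp (hall cfgI .refl)
  exact down m true true 0 hface₀ (hI ▸ .refl) (hI ▸ hm)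

end NoHalt

/-! ### Subtyping vs. the machine -/

section Sub

theorem usub_of_stepsN {C : Type*} {table : Set (URule C)} :
    ∀ {n : ℕ} {w w' : List C}, StepsN (UStep table) n (some (w, w')) none →
      USub table w w' := by
  intro n
  induction n with
  | zero => intro w w' h; cases h
  | succ n ih =>
      intro w w' h
      cases h with
      | head hs hrest =>
          cases hs with
          | halt h' => exact .nil h'
          | move h' => exact .cons h' (ih hrest)

theorem usub_iff_reach {C : Type*} {table : Set (URule C)} {w w' : List C} :
    USub table w w' ↔
      Relation.ReflTransGen (UStep table) (some (w, w')) none := by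
  constructor
  · intro h
    induction h with
    | nil h => exact .single (.halt h)
    | cons h _ ih => exact .head (.move h) ih
  · intro h
    obtain ⟨n, hn⟩ := reflTransGen_iff_stepsN.mp h
    exact usub_of_stepsN hn

end Sub

end Fig4Sim
end Dev
/-- **Correctness of the reduction (Figure 4)**: if the Turing machine `M` halts on
input `α_I`, the simulating subtyping machine, started in the configuration above,
reaches the halting configuration `•`; if `M` does not halt, the subtyping machine runs
forever (every reachable configuration has a successor — in particular `•` is never
reached). Hence `Q_I^wR L_# N L_{a_m} N … L_{a₁} N M^L N L_# N E E Z ⊑ E E Z` iff `M`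
halts on `α_I`. -/
theorem fig4_simulation {Q Γ : Type*} (M : TM Q Γ) (input : List Γ) :
    (TMHalts M input →
      Relation.ReflTransGen (UStep (Fig4 M))
        (some (initWord M input, [.E, .E])) none) ∧
    (¬ TMHalts M input →
      ∀ cfg : UConfig (FCls Q Γ),
        Relation.ReflTransGen (UStep (Fig4 M))
          (some (initWord M input, [.E, .E])) cfg →
        ∃ cfg', UStep (Fig4 M) cfg cfg') ∧
    (USub (Fig4 M) (initWord M input) [.E, .E] ↔ TMHalts M input) := by
  refine ⟨Fig4Sim.halts_to_none, Fig4Sim.not_halts_no_stuck, ?_, ?_⟩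
  · intro hsub
    by_contra hnh
    obtain ⟨cfg', hstep⟩ := Fig4Sim.not_halts_no_stuck hnh none
      (Fig4Sim.usub_iff_reach.mp hsub)
    cases hstep
  · intro h
    exact Fig4Sim.usub_iff_reach.mpr (Fig4Sim.halts_to_none h)
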